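/- Let γ > 1 and let α satisfy α > 0 or α < −γ. Fix v ∈ ℝ, densities ρ₋, ρ₊ > 0 with ρ₋ ≠ ρ₊, a pressure p₊ > 0, and set p₋ = p₊ · (ρ₋/ρ₊)^{α/(α+γ−1)}. If F = (Fρ, Fρv, Fρe) ∈ ℝ³ is entropy conservative for Harten's entropy with parameter α at the pair of states (ρ₋, v, p₋), (ρ₊, v, p₊), i.e. ⟦w⟧·F − ⟦ψ⟧ = 0, then the density component is given by Fρ = −((γ−1)/α) · (⟦ρ^{α/(α+γ−1)}⟧ / ⟦ρ^{(1−γ)/(α+γ−1)}⟧) · v, where ⟦ρ^s⟧ = ρ₊^s − ρ₋^s. -/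

import Mathlib

/-- First component of the entropy variables for Harten's entropy with
parameter `α` for the 1D compressible Euler equations (`γ` is the ratio of
specific heats). -/
noncomputable def hartenW1 (γ α ρ v p : ℝ) : ℝ :=
  ρ / p * (p / ρ ^ γ) ^ (1 / (α + γ)) * (-(α / (γ - 1)) * (p / ρ) - v ^ 2 / 2)

/-- Second component of the entropy variables for Harten's entropy. -/
noncomputable def hartenW2 (γ α ρ v p : ℝ) : ℝ :=
  ρ / p * (p / ρ ^ γ) ^ (1 / (α + γ)) * v

/-- Third component of the entropy variables for Harten's entropy. -/
noncomputable def hartenW3 (γ α ρ v p : ℝ) : ℝ :=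
  ρ / p * (p / ρ ^ γ) ^ (1 / (α + γ)) * (-1)

/-- Flux potential associated with Harten's entropy. -/
noncomputable def hartenPsi (γ α ρ v p : ℝ) : ℝ :=
  ρ * (p / ρ ^ γ) ^ (1 / (α + γ)) * v

/-- Entropy conservation residual `⟦w⟧ ⬝ F - ⟦ψ⟧` of a numerical flux
`(Fρ, Fρv, Fρe)` at the pair of states `(ρm, vm, pm)`, `(ρp, vp, pp)`. -/
noncomputable def ecResidual (γ α ρm vm pm ρp vp pp Fρ Fρv Fρe : ℝ) : ℝ :=
  (hartenW1 γ α ρp vp pp - hartenW1 γ α ρm vm pm) * Fρ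
    + (hartenW2 γ α ρp vp pp - hartenW2 γ α ρm vm pm) * Fρv
    + (hartenW3 γ α ρp vp pp - hartenW3 γ α ρm vm pm) * Fρe
    - (hartenPsi γ α ρp vp pp - hartenPsi γ α ρm vm pm)

/-- **Lemma 2.2 of the paper.** For constant velocity and pressures related by
`p₋ = p₊ (ρ₋/ρ₊)^(α/(α+γ-1))`, a numerical flux that is entropy conservative
for Harten's entropy with parameter `α` has density flux
`Fρ = -((γ-1)/α) ⟦ρ^(α/(α+γ-1))⟧ / ⟦ρ^((1-γ)/(α+γ-1))⟧ ⋅ v`. -/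
theorem density_flux_special_pressure
    (γ α v ρm ρp pp pm Fρ Fρv Fρe : ℝ)
    (hγ : 1 < γ) (hα : 0 < α ∨ α < -γ)
    (hρm : 0 < ρm) (hρp : 0 < ρp) (hρ : ρm ≠ ρp) (hpp : 0 < pp)
    (hpm : pm = pp * (ρm / ρp) ^ (α / (α + γ - 1)))
    (hec : ecResidual γ α ρm v pm ρp v pp Fρ Fρv Fρe = 0) :
    Fρ = -((γ - 1) / α) *
      ((ρp ^ (α / (α + γ - 1)) - ρm ^ (α / (α + γ - 1))) /
        (ρp ^ ((1 - γ) / (α + γ - 1)) - ρm ^ ((1 - γ) / (α + γ - 1)))) * v := by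
  have hγ1 : γ - 1 ≠ 0 := sub_ne_zero.2 (ne_of_gt hγ)
  have haγ : α + γ ≠ 0 := by rcases hα with h | h <;> nlinarith
  have haγ1 : α + γ - 1 ≠ 0 := by rcases hα with h | h <;> nlinarith
  have hα0 : α ≠ 0 := by rcases hα with h | h <;> nlinarith
  set e := 1 / (α + γ) with he
  set E := α / (α + γ - 1) with hE
  set k := (1 - γ) / (α + γ - 1) with hk
  obtain ⟨C, hC⟩ : ∃ C : ℝ, C = pp * ρp ^ (-E) := ⟨_, rfl⟩
  have hCpos : 0 < C := hC ▸ mul_pos hpp (Real.rpow_pos_of_pos hρp _)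
  have hpm' : pm = C * ρm ^ E := by
    rw [hpm, hC, Real.div_rpow hρm.le hρp.le, Real.rpow_neg hρp.le]
    ring
  have hpp' : pp = C * ρp ^ E := by
    rw [hC, Real.rpow_neg hρp.le]
    field_simp
  have hexp1 : (E - γ) * e = k := by rw [hE, hk, he]; field_simp; ring
  have hexp2 : (1 : ℝ) + k = E := by rw [hE, hk]; field_simp; ring
  have h1 : ∀ ρ : ℝ, 0 < ρ → ρ * ρ ^ k = ρ ^ E := by
    intro ρ hρ0
    nth_rewrite 1 [← Real.rpow_one ρ]
    rw [← Real.rpow_add hρ0, hexp2]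
  have key : ∀ ρ : ℝ, 0 < ρ → ((C * ρ ^ E) / ρ ^ γ) ^ e = C ^ e * ρ ^ k := by
    intro ρ hρ0
    rw [mul_div_assoc, ← Real.rpow_sub hρ0,
        Real.mul_rpow hCpos.le (Real.rpow_pos_of_pos hρ0 _).le,
        ← Real.rpow_mul hρ0.le, hexp1]
  have hs : ∀ ρ : ℝ, 0 < ρ → ρ / (C * ρ ^ E) * (C ^ e * ρ ^ k) = C ^ (e - 1) := by
    intro ρ hρ0
    have hE0 : (ρ:ℝ) ^ E ≠ 0 := (Real.rpow_pos_of_pos hρ0 _).ne'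
    rw [Real.rpow_sub hCpos, Real.rpow_one]
    field_simp
    linear_combination h1 ρ hρ0
  have hpr : ∀ ρ : ℝ, 0 < ρ → (C * ρ ^ E) / ρ = C * ρ ^ k := by
    intro ρ hρ0
    rw [div_eq_iff hρ0.ne']
    linear_combination (-C) * h1 ρ hρ0
  have hCe : (C:ℝ) ^ e = C ^ (e - 1) * C := by
    rw [Real.rpow_sub hCpos, Real.rpow_one]
    field_simp
  have hS0 : (C:ℝ) ^ (e - 1) ≠ 0 := (Real.rpow_pos_of_pos hCpos _).ne'
  have hk0 : k ≠ 0 := div_ne_zero (sub_ne_zero.2 (ne_of_lt hγ)) haγ1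
  have hjump : ρp ^ k - ρm ^ k ≠ 0 := by
    intro h
    exact hρ (Real.rpow_left_injOn hk0 hρm.le hρp.le
      (by simpa using (sub_eq_zero.mp h).symm))
  -- rewrite the entropy conservation residual
  rw [hpm', hpp'] at hec
  simp only [ecResidual, hartenW1, hartenW2, hartenW3, hartenPsi] at hec
  rw [key ρm hρm, key ρp hρp, hs ρm hρm, hs ρp hρp, hpr ρm hρm, hpr ρp hρp] at hec
  rw [hCe] at hec
  have h2 : -(α / (γ - 1)) * (ρp ^ k - ρm ^ k) * Fρ - (ρp ^ E - ρm ^ E) * v = 0 := by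
    apply mul_left_cancel₀ (mul_ne_zero hS0 hCpos.ne')
    rw [mul_zero]
    linear_combination hec
      + (C ^ (e - 1) * C * v) * h1 ρp hρp - (C ^ (e - 1) * C * v) * h1 ρm hρm
  field_simp at h2
  field_simp [hjump]
  linear_combination (-1 : ℝ) * h2
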